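/- Let 1 < p < q < ∞ and 0 < θ < ∞. If ω ∈ A^{ρ,θ}_{p,q}(ℝ^d), then ω^q ∈ A^{ρ,θ̃}_t(ℝ^d) with t = 1 + q/p' and θ̃ = θ/(1/q + 1/p'), where p' = p/(p−1). -/

import Mathlib

open MeasureTheory

noncomputable section

def vol {d : ℕ} (S : Set (EuclideanSpace ℝ (Fin d))) : ℝ := (volume S).toReal

/-- for `1 < p < q < ∞`, `ω ∈ A^{ρ,θ}_{p,q}` implies
`ω^q ∈ A^{ρ,θ̃}_t` with `t = 1 + q/p'` and `θ̃ = θ/(1/q + 1/p')`, `p' = p/(p-1)`.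
Here `t' = t/(t-1)` so `t'/t = 1/(t-1)` and `1/t' = 1 - 1/t`. -/
theorem stmt11 (d : ℕ) (p q θ : ℝ) (hp : 1 < p) (hpq : p < q) (hθ : 0 < θ)
    (ρ : EuclideanSpace ℝ (Fin d) → ℝ) (hρ : ∀ x, 0 < ρ x)
    (ω : EuclideanSpace ℝ (Fin d) → ℝ) (hω : ∀ x, 0 ≤ ω x)
    (C : ℝ) (hC : 0 < C)
    (hApq : ∀ (x₀ : EuclideanSpace ℝ (Fin d)) (r : ℝ), 0 < r →
      ((1 / vol (Metric.ball x₀ r)) * ∫ x in Metric.ball x₀ r, ω x ^ q) ^ (1 / q) *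
          ((1 / vol (Metric.ball x₀ r)) *
              ∫ x in Metric.ball x₀ r, ω x ^ (-(p / (p - 1)))) ^ (1 / (p / (p - 1))) ≤
        C * (1 + r / ρ x₀) ^ θ) :
    ∃ C' > (0 : ℝ), ∀ (x₀ : EuclideanSpace ℝ (Fin d)) (r : ℝ), 0 < r →
      ((1 / vol (Metric.ball x₀ r)) *
          ∫ x in Metric.ball x₀ r, ω x ^ q) ^ (1 / (1 + q / (p / (p - 1)))) *
        ((1 / vol (Metric.ball x₀ r)) *
            ∫ x in Metric.ball x₀ r,
              (ω x ^ q) ^ (-(1 / ((1 + q / (p / (p - 1))) - 1)))) ^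
          (1 - 1 / (1 + q / (p / (p - 1)))) ≤
        C' * (1 + r / ρ x₀) ^ (θ / (1 / q + 1 / (p / (p - 1)))) := by
  have hq : 0 < q := by linarith
  have hp1 : 0 < p - 1 := by linarith
  set p' : ℝ := p / (p - 1) with hp'def
  have hp'pos : 0 < p' := div_pos (by linarith) hp1
  have hsum : 0 < 1 / q + 1 / p' := by positivity
  set s : ℝ := 1 / (1 / q + 1 / p') with hsdef
  have hs : 0 < s := by positivity
  refine ⟨C ^ s, Real.rpow_pos_of_pos hC s, ?_⟩
  intro x₀ r hr
  have key := hApq x₀ r hr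
  have hρx : 0 < 1 + r / ρ x₀ := by
    have := hρ x₀; positivity
  -- rewrite the inner integrand
  have hqp' : (1 + q / p') - 1 = q / p' := by ring
  have hint : ∀ x, (ω x ^ q) ^ (-(1 / ((1 + q / p') - 1))) = ω x ^ (-p') := by
    intro x
    rw [← Real.rpow_mul (hω x)]
    congr 1
    rw [hqp', one_div_div]
    field_simp
  simp only [hint]
  set A : ℝ := (1 / vol (Metric.ball x₀ r)) * ∫ x in Metric.ball x₀ r, ω x ^ q with hA_def
  set B : ℝ := (1 / vol (Metric.ball x₀ r)) * ∫ x in Metric.ball x₀ r, ω x ^ (-p') with hB_def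
  have hvol : 0 ≤ 1 / vol (Metric.ball x₀ r) := by
    simp only [vol]; positivity
  have hA : 0 ≤ A :=
    mul_nonneg hvol (integral_nonneg fun x => Real.rpow_nonneg (hω x) _)
  have hB : 0 ≤ B :=
    mul_nonneg hvol (integral_nonneg fun x => Real.rpow_nonneg (hω x) _)
  have ht : 0 < 1 + q / p' := by positivity
  have e1 : 1 / (1 + q / p') = (1 / q) * s := by
    rw [hsdef]; field_simp
  have e2 : 1 - 1 / (1 + q / p') = (1 / p') * s := by
    rw [hsdef]; field_simp; ring
  have e3 : θ / (1 / q + 1 / p') = θ * s := by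
    rw [hsdef]; ring
  rw [e2, e1, e3]
  calc A ^ ((1 / q) * s) * B ^ ((1 / p') * s)
      = (A ^ (1 / q)) ^ s * (B ^ (1 / p')) ^ s := by
        rw [Real.rpow_mul hA, Real.rpow_mul hB]
    _ = (A ^ (1 / q) * B ^ (1 / p')) ^ s :=
        (Real.mul_rpow (Real.rpow_nonneg hA _) (Real.rpow_nonneg hB _)).symm
    _ ≤ (C * (1 + r / ρ x₀) ^ θ) ^ s :=
        Real.rpow_le_rpow
          (mul_nonneg (Real.rpow_nonneg hA _) (Real.rpow_nonneg hB _)) key hs.le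
    _ = C ^ s * ((1 + r / ρ x₀) ^ θ) ^ s :=
        Real.mul_rpow hC.le (Real.rpow_nonneg hρx.le _)
    _ = C ^ s * (1 + r / ρ x₀) ^ (θ * s) := by
        rw [← Real.rpow_mul hρx.le]
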